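/- Let m ≥ 1, let u : [m+1] → ℝ^m be affinely independent (a full-dimensional simplex in ℝ^m) and let c ∈ ℝ^m satisfy ⟪c, u_i⟫ < ⟪c, u_j⟫ for all i < j. Then the number of distinct max-slope arborescences, i.e. the cardinality of the set {A : [m+1] → [m+1] | there exists a generic ω ∈ ℝ^m with A = A^ω}, equals the Catalan number catalan(m). -/

import Mathlib

open scoped RealInnerProductSpace

/-- The slope `ρ^ω(i,j)` of the edge from vertex `u i` to vertex `u j`,
with respect to the objective direction `c`. -/
noncomputable def rho {n d : ℕ} (u : Fin n → EuclideanSpace ℝ (Fin d))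
    (c ω : EuclideanSpace ℝ (Fin d)) (i j : Fin n) : ℝ :=
  ⟪ω, u j - u i⟫ / ⟪c, u j - u i⟫

/-- `τ^ω(i)`: the maximal slope from vertex `i` to a later vertex
(the supremum of the finite set of slopes `ρ^ω(i,j)` for `i < j`;
it is meaningful for non-maximal `i`, where this set is nonempty). -/
noncomputable def tau {n d : ℕ} (u : Fin n → EuclideanSpace ℝ (Fin d))
    (c ω : EuclideanSpace ℝ (Fin d)) (i : Fin n) : ℝ :=
  sSup {x : ℝ | ∃ j : Fin n, i < j ∧ x = rho u c ω i j}

/-- `ω` is generic: for each non-maximal vertex `i` there is a unique `j > i`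
whose slope attains the maximal slope `τ^ω(i)`. -/
def Generic {n d : ℕ} (u : Fin n → EuclideanSpace ℝ (Fin d))
    (c ω : EuclideanSpace ℝ (Fin d)) : Prop :=
  ∀ i : Fin n, (i : ℕ) + 1 < n →
    ∃! j : Fin n, i < j ∧ rho u c ω i j = tau u c ω i

/-- `A` is the max-slope arborescence `A^ω`: it fixes the maximal vertex, and
sends every other vertex `i` to an improving neighbour attaining `τ^ω(i)`. -/
def IsArbo {n d : ℕ} (u : Fin n → EuclideanSpace ℝ (Fin d))
    (c ω : EuclideanSpace ℝ (Fin d)) (A : Fin n → Fin n) : Prop :=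
  (∀ i : Fin n, (i : ℕ) + 1 = n → A i = i) ∧
  (∀ i : Fin n, (i : ℕ) + 1 < n →
    i < A i ∧ rho u c ω i (A i) = tau u c ω i)

open Filter

namespace MaxSlope



/-- slope of segment from `i` to `j` for heights `g` over abscissae `f`. -/
noncomputable def sl {n : ℕ} (f g : Fin n → ℝ) (i j : Fin n) : ℝ :=
  (g j - g i) / (f j - f i)

/-- `a` is the (strict) max-slope arborescence of `(f,g)`. -/
def Best {n : ℕ} (f g : Fin n → ℝ) (a : Fin n → Fin n) : Prop :=
  ∀ i : Fin n, (i : ℕ) + 1 < n →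
    i < a i ∧ ∀ j : Fin n, i < j → j ≠ a i → sl f g i j < sl f g i (a i)

/-- non-crossing increasing map fixing the top element. -/
def NCP {n : ℕ} (a : Fin n → Fin n) : Prop :=
  (∀ i : Fin n, (i : ℕ) + 1 = n → a i = i) ∧
  (∀ i : Fin n, (i : ℕ) + 1 < n → i < a i) ∧
  (∀ i j : Fin n, i < j → j < a i → a j ≤ a i)

instance {n : ℕ} : DecidablePred (NCP (n := n)) := fun _ => by
  unfold NCP; infer_instance

lemma mediant_chain {a b p q : ℝ} (hp : 0 < p) (hq : 0 < q)
    (h : a / p < (a + b) / (p + q)) : (a + b) / (p + q) < b / q := by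
  rw [div_lt_div_iff₀ hp (by linarith)] at h
  rw [div_lt_div_iff₀ (by linarith) hq]
  nlinarith

lemma mediant_chain' {a b p q : ℝ} (hp : 0 < p) (hq : 0 < q)
    (h : (a + b) / (p + q) < a / p) : b / q < (a + b) / (p + q) := by
  rw [div_lt_div_iff₀ (by linarith) hp] at h
  rw [div_lt_div_iff₀ hq (by linarith)]
  nlinarith

lemma mediant_le_max {a b p q : ℝ} (hp : 0 < p) (hq : 0 < q) :
    (a + b) / (p + q) ≤ max (a / p) (b / q) := by
  rcases le_total (a / p) (b / q) with h | h
  · rw [div_le_div_iff₀ hp hq] at h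
    refine le_max_of_le_right ?_
    rw [div_le_div_iff₀ (by linarith) hq]; nlinarith
  · rw [div_le_div_iff₀ hq hp] at h
    refine le_max_of_le_left ?_
    rw [div_le_div_iff₀ (by linarith) hp]; nlinarith

lemma sl_mediant {n : ℕ} (f g : Fin n → ℝ) {i j k : Fin n} :
    sl f g i k = ((g j - g i) + (g k - g j)) / ((f j - f i) + (f k - f j)) := by
  unfold sl; ring_nf

lemma best_ncp {n : ℕ} {f g : Fin n → ℝ} {a : Fin n → Fin n}
    (hf : StrictMono f) (hb : Best f g a)
    (hlast : ∀ i : Fin n, (i : ℕ) + 1 = n → a i = i) : NCP a := by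
  refine ⟨hlast, fun i hi => (hb i hi).1, fun i j hij hja => ?_⟩
  -- positivity of gaps
  have gap : ∀ {p q : Fin n}, p < q → 0 < f q - f p := fun h => sub_pos.2 (hf h)
  by_contra hcon
  push_neg at hcon
  -- i < j < a i < a j
  have hi : (i : ℕ) + 1 < n := by
    have := (a i).isLt; have h1 : (i : ℕ) < j := hij; have h2 : (j : ℕ) < a i := hja; omega
  have hj : (j : ℕ) + 1 < n := by
    have h0 := (a j).isLt
    have h1 : (j : ℕ) < a i := hja
    have h2 : (a i : ℕ) < a j := hcon
    omega
  set k := a i with hk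
  set l := a j with hl
  have hjk : j < k := hja
  have hkl : k < l := hcon
  have h1 : sl f g i j < sl f g i k := (hb i hi).2 j hij (Fin.ne_of_lt hjk)
  have h2 : sl f g i l < sl f g i k := (hb i hi).2 l (hij.trans (hjk.trans hkl)) (Fin.ne_of_gt hkl)
  have h3 : sl f g j k < sl f g j l := (hb j hj).2 k (hjk) (Fin.ne_of_lt hkl)
  -- from h1 : sl i k < sl j k
  have e1 : sl f g i k = ((g j - g i) + (g k - g j)) / ((f j - f i) + (f k - f j)) :=
    sl_mediant f g
  have c1 : sl f g i k < sl f g j k := by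
    have := mediant_chain (gap hij) (gap hjk) (by rw [← e1]; exact h1)
    rw [e1]; exact this
  -- from h2 : sl k l < sl i l
  have e2 : sl f g i l = ((g k - g i) + (g l - g k)) / ((f k - f i) + (f l - f k)) :=
    sl_mediant f g
  have c2 : sl f g k l < sl f g i l := by
    have := mediant_chain' (gap (hij.trans hjk)) (gap hkl) (by rw [← e2]; exact h2)
    rw [e2]; exact this
  -- mediant bound for (j,k,l)
  have e3 : sl f g j l = ((g k - g j) + (g l - g k)) / ((f k - f j) + (f l - f k)) :=
    sl_mediant f g
  have c3 : sl f g j l ≤ max (sl f g j k) (sl f g k l) := by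
    rw [e3]; exact mediant_le_max (gap hjk) (gap hkl)
  have : sl f g k l < sl f g j l := by linarith
  rcases max_cases (sl f g j k) (sl f g k l) with ⟨hm, _⟩ | ⟨hm, _⟩ <;> rw [hm] at c3 <;> linarith

set_option maxHeartbeats 1000000 in
lemma exists_best : ∀ (n : ℕ) (f : Fin n → ℝ), StrictMono f →
    ∀ a : Fin n → Fin n, NCP a → ∃ g, Best f g a := by
  intro n
  induction n using Nat.strong_induction_on with
  | _ n IH =>
  intro f hf a ha
  rcases lt_or_ge n 2 with hn | hn
  · exact ⟨0, fun i hi => absurd i.isLt (by omega)⟩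
  -- n ≥ 2
  have gap : ∀ {p q : Fin n}, p < q → 0 < f q - f p := fun h => sub_pos.2 (hf h)
  have hK0 : 0 < ((a ⟨0, by omega⟩ : Fin n) : ℕ) := ha.2.1 ⟨0, by omega⟩ (by show 0 + 1 < n; omega)
  obtain ⟨K, hKdef⟩ : ∃ K : ℕ, K = ((a ⟨0, by omega⟩ : Fin n) : ℕ) := ⟨_, rfl⟩
  have hK0 : 0 < K := hKdef ▸ hK0
  have hKn : K < n := hKdef ▸ (a ⟨0, by omega⟩).isLt
  -- every 0 < j < K has a j ≤ K
  have hsub1 : ∀ j : Fin n, 0 < (j : ℕ) → (j : ℕ) < K → (a j : ℕ) ≤ K := by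
    intro j hj1 hj2
    have := ha.2.2 ⟨0, by omega⟩ j (by exact hj1) (by rw [Fin.lt_def, ← hKdef]; exact hj2)
    rw [hKdef]; exact this
  have hlast : ∀ j : Fin n, (j : ℕ) + 1 = n → (a j : ℕ) = (j : ℕ) := by
    intro j hj; rw [ha.1 j hj]
  have hstep : ∀ j : Fin n, (j : ℕ) + 1 < n → (j : ℕ) < (a j : ℕ) := fun j hj => ha.2.1 j hj
  have hcross : ∀ i j : Fin n, (i : ℕ) < j → (j : ℕ) < a i → (a j : ℕ) ≤ a i := by
    intro i j h1 h2; exact ha.2.2 i j h1 h2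
  -- block 1 : indices 1..K
  obtain ⟨f1, hf1⟩ : ∃ f1 : Fin K → ℝ, ∀ t : Fin K, f1 t = f ⟨(t : ℕ) + 1, by omega⟩ :=
    ⟨_, fun t => rfl⟩
  have ha1bound : ∀ t : Fin K, (t : ℕ) + 1 ≠ K →
      (t : ℕ) < ((a ⟨(t : ℕ) + 1, by omega⟩ : Fin n) : ℕ) - 1 ∧
      ((a ⟨(t : ℕ) + 1, by omega⟩ : Fin n) : ℕ) - 1 < K := by
    intro t ht
    have htK := t.isLt
    have h1 := hstep ⟨(t : ℕ) + 1, by omega⟩ (by simp; omega)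
    have h2 := hsub1 ⟨(t : ℕ) + 1, by omega⟩ (by simp) (by simp; omega)
    simp at h1
    omega
  obtain ⟨a1, ha1⟩ : ∃ a1 : Fin K → Fin K, ∀ t : Fin K,
      (a1 t : ℕ) = if (t : ℕ) + 1 = K then (t : ℕ)
        else ((a ⟨(t : ℕ) + 1, by omega⟩ : Fin n) : ℕ) - 1 := by
    refine ⟨fun t => if h : (t : ℕ) + 1 = K then t
      else ⟨((a ⟨(t : ℕ) + 1, by omega⟩ : Fin n) : ℕ) - 1, (ha1bound t h).2⟩, fun t => ?_⟩
    by_cases h : (t : ℕ) + 1 = K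
    · simp only [dif_pos h, if_pos h]
    · simp only [dif_neg h, if_neg h]
  have hmono1 : StrictMono f1 := fun s t hst => by
    have hst' : (s : ℕ) < (t : ℕ) := hst
    rw [hf1, hf1]; exact hf (show _ < _ from Fin.mk_lt_mk.2 (by omega))
  have hNC1 : NCP a1 := by
    refine ⟨fun t ht => ?_, fun t ht => ?_, fun s t hst hta => ?_⟩
    · apply Fin.ext; rw [ha1]; simp [ht]
    · rw [Fin.lt_def, ha1]
      rw [if_neg (by omega)]
      exact (ha1bound t (by omega)).1
    · have hsK : (s : ℕ) + 1 ≠ K := by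
        intro h
        rw [Fin.lt_def, ha1, if_pos h] at hta
        have : (t : ℕ) < K := t.isLt
        omega
      rw [Fin.lt_def, ha1, if_neg hsK] at hta
      rcases eq_or_ne ((t : ℕ) + 1) K with htK | htK
      · rw [Fin.le_def, ha1, if_pos htK, ha1, if_neg hsK]
        omega
      · rw [Fin.le_def, ha1, if_neg htK, ha1, if_neg hsK]
        have hst' : (s : ℕ) < (t : ℕ) := hst
        have h1 := hcross ⟨(s : ℕ) + 1, by have := s.isLt; omega⟩ ⟨(t : ℕ) + 1, by have := t.isLt; omega⟩
          (by show (s : ℕ) + 1 < (t : ℕ) + 1; omega) (by show ((t : ℕ) + 1) < _; omega)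
        have h2 := ha1bound s hsK
        omega
  -- block 2 : indices K..n-1
  obtain ⟨f2, hf2⟩ : ∃ f2 : Fin (n - K) → ℝ, ∀ t : Fin (n - K), f2 t = f ⟨(t : ℕ) + K, by have := t.isLt; omega⟩ :=
    ⟨_, fun t => rfl⟩
  obtain ⟨a2, ha2⟩ : ∃ a2 : Fin (n - K) → Fin (n - K), ∀ t : Fin (n - K),
      (a2 t : ℕ) = ((a ⟨(t : ℕ) + K, by have := t.isLt; omega⟩ : Fin n) : ℕ) - K := by
    refine ⟨fun t => ⟨((a ⟨(t : ℕ) + K, by have := t.isLt; omega⟩ : Fin n) : ℕ) - K, ?_⟩, fun t => rfl⟩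
    have := (a ⟨(t : ℕ) + K, by have := t.isLt; omega⟩).isLt
    omega
  have hmono2 : StrictMono f2 := fun s t hst => by
    have hst' : (s : ℕ) < (t : ℕ) := hst
    rw [hf2, hf2]; exact hf (show _ < _ from Fin.mk_lt_mk.2 (by omega))
  have hNC2 : NCP a2 := by
    refine ⟨fun t ht => ?_, fun t ht => ?_, fun s t hst hta => ?_⟩
    · apply Fin.ext; rw [ha2]
      have := hlast ⟨(t : ℕ) + K, by have := t.isLt; omega⟩ (by show (t : ℕ) + K + 1 = n; omega)
      simp at this ⊢
      omega
    · rw [Fin.lt_def, ha2]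
      have := hstep ⟨(t : ℕ) + K, by have := t.isLt; omega⟩ (by show (t : ℕ) + K + 1 < n; omega)
      simp at this
      omega
    · have hst' : (s : ℕ) < (t : ℕ) := hst
      rw [Fin.lt_def, ha2] at hta
      rw [Fin.le_def, ha2, ha2]
      have h1 := hcross ⟨(s : ℕ) + K, by have := s.isLt; omega⟩ ⟨(t : ℕ) + K, by have := t.isLt; omega⟩
        (by show (s : ℕ) + K < (t : ℕ) + K; omega) (by show ((t : ℕ) + K) < _; omega)
      omega
  obtain ⟨g1, hg1⟩ := IH K hKn f1 hmono1 a1 hNC1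
  obtain ⟨g2, hg2⟩ := IH (n - K) (by omega) f2 hmono2 a2 hNC2
  -- auxiliary height data
  obtain ⟨G2, hG2⟩ : ∃ G2 : Fin n → ℝ, ∀ j : Fin n,
      G2 j = g2 ⟨(j : ℕ) - K, by have := j.isLt; omega⟩ - g2 ⟨0, by omega⟩ := ⟨_, fun _ => rfl⟩
  obtain ⟨D1, hD1⟩ : ∃ D1 : Fin n → ℝ, ∀ (j : Fin n) (h1 : 0 < (j : ℕ)) (h2 : (j : ℕ) ≤ K),
      D1 j = g1 ⟨(j : ℕ) - 1, by omega⟩ - g1 ⟨K - 1, by omega⟩ := by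
    refine ⟨fun j => if h : 0 < (j : ℕ) ∧ (j : ℕ) ≤ K then
      g1 ⟨(j : ℕ) - 1, by omega⟩ - g1 ⟨K - 1, by omega⟩ else 0, fun j h1 h2 => ?_⟩
    simp only [dif_pos (And.intro h1 h2)]
  have kF : Fin n := ⟨K, hKn⟩
  -- choose S
  have hSev : ∀ j : Fin n, ∀ᶠ S : ℝ in atTop,
      K < (j : ℕ) → G2 j < S * (f j - f ⟨K, hKn⟩) := by
    intro j
    by_cases h : K < (j : ℕ)
    · have hd : (0:ℝ) < f j - f ⟨K, hKn⟩ := gap (Fin.lt_def.2 (by exact h))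
      filter_upwards [eventually_gt_atTop (G2 j / (f j - f ⟨K, hKn⟩))] with S hS _
      calc G2 j = G2 j / (f j - f ⟨K, hKn⟩) * (f j - f ⟨K, hKn⟩) := by
            field_simp
        _ < S * (f j - f ⟨K, hKn⟩) := by
            exact mul_lt_mul_of_pos_right hS hd
    · exact Eventually.of_forall fun S hc => absurd hc h
  obtain ⟨S, hS⟩ := (eventually_all.2 hSev).exists
  -- choose L
  have hLev1 : ∀ i j : Fin n, ∀ᶠ L : ℝ in atTop,
      ∀ (h1 : 0 < (i : ℕ)) (h2 : (i : ℕ) < K), K < (j : ℕ) →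
      G2 j - D1 i + L * (f ⟨K, hKn⟩ - f i) <
        (L + sl f1 g1 ⟨(i : ℕ) - 1, by omega⟩ (a1 ⟨(i : ℕ) - 1, by omega⟩)) * (f j - f i) := by
    intro i j
    by_cases hC : 0 < (i : ℕ) ∧ (i : ℕ) < K ∧ K < (j : ℕ)
    · obtain ⟨h1, h2, h3⟩ := hC
      have hd : (0:ℝ) < f j - f i := gap (Fin.mk_lt_mk.2 (by omega) : (⟨(i:ℕ), i.isLt⟩ : Fin n) < ⟨(j:ℕ), j.isLt⟩)
      have hx : (0:ℝ) < f ⟨K, hKn⟩ - f i := gap (Fin.mk_lt_mk.2 (by omega) : (⟨(i:ℕ), i.isLt⟩ : Fin n) < ⟨K, hKn⟩)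
      have hdx : (0:ℝ) < (f j - f i) - (f ⟨K, hKn⟩ - f i) := by
        have : (0:ℝ) < f j - f ⟨K, hKn⟩ := gap (Fin.mk_lt_mk.2 (by omega) : (⟨K, hKn⟩ : Fin n) < ⟨(j:ℕ), j.isLt⟩)
        linarith
      set s := sl f1 g1 ⟨(i : ℕ) - 1, by omega⟩ (a1 ⟨(i : ℕ) - 1, by omega⟩) with hs
      filter_upwards [eventually_gt_atTop
        ((G2 j - D1 i - s * (f j - f i)) / ((f j - f i) - (f ⟨K, hKn⟩ - f i)))] with L hL _ _ _
      have h4 := (div_lt_iff₀ hdx).1 hL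
      nlinarith
    · refine Eventually.of_forall fun L h1 h2 h3 => absurd ⟨h1, h2, h3⟩ hC
  have hLev2 : ∀ j : Fin n, ∀ᶠ L : ℝ in atTop,
      ∀ (h1 : 0 < (j : ℕ)) (h2 : (j : ℕ) < K), D1 j < (L - S) * (f ⟨K, hKn⟩ - f j) := by
    intro j
    by_cases hC : 0 < (j : ℕ) ∧ (j : ℕ) < K
    · obtain ⟨h1, h2⟩ := hC
      have hd : (0:ℝ) < f ⟨K, hKn⟩ - f j := gap (Fin.mk_lt_mk.2 (by omega) : (⟨(j:ℕ), j.isLt⟩ : Fin n) < ⟨K, hKn⟩)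
      filter_upwards [eventually_gt_atTop (S + D1 j / (f ⟨K, hKn⟩ - f j))] with L hL _ _
      have : D1 j / (f ⟨K, hKn⟩ - f j) < L - S := by linarith
      have := (div_lt_iff₀ hd).1 this
      linarith
    · exact Eventually.of_forall fun L h1 h2 => absurd ⟨h1, h2⟩ hC
  obtain ⟨L, hL1, hL2⟩ :=
    ((eventually_all.2 fun i => eventually_all.2 (hLev1 i)).and (eventually_all.2 hLev2)).exists
  replace hL1 := fun i j => hL1 i j
  -- the height function
  obtain ⟨g, hgval⟩ : ∃ g : Fin n → ℝ, ∀ j : Fin n,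
      g j = if (j : ℕ) = 0 then -S * (f ⟨K, hKn⟩ - f ⟨0, by omega⟩)
        else if (j : ℕ) ≤ K then -L * (f ⟨K, hKn⟩ - f j) + D1 j
        else G2 j := ⟨_, fun _ => rfl⟩
  -- value lemmas
  have hg0 : g ⟨0, by omega⟩ = -S * (f ⟨K, hKn⟩ - f ⟨0, by omega⟩) := by
    rw [hgval]; simp
  have hgmid : ∀ j : Fin n, 0 < (j : ℕ) → (j : ℕ) ≤ K →
      g j = -L * (f ⟨K, hKn⟩ - f j) + D1 j := fun j h1 h2 => by
    rw [hgval, if_neg (by omega), if_pos h2]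
  have hgK : g ⟨K, hKn⟩ = 0 := by
    rw [hgmid ⟨K, hKn⟩ hK0 le_rfl, hD1 ⟨K, hKn⟩ hK0 le_rfl]
    simp
  have hG2K : G2 ⟨K, hKn⟩ = 0 := by
    rw [hG2]; simp
  have hgtop : ∀ j : Fin n, K ≤ (j : ℕ) → g j = G2 j := by
    intro j h
    rcases eq_or_lt_of_le h with h' | h'
    · have : j = ⟨K, hKn⟩ := Fin.ext h'.symm
      rw [this, hgK, hG2K]
    · rw [hgval, if_neg (by omega), if_neg (by omega)]
  -- slope reduction lemmas
  have slmid : ∀ (i j : Fin n) (h1 : 0 < (i : ℕ)) (h2 : (i : ℕ) < (j : ℕ)) (h3 : (j : ℕ) ≤ K),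
      sl f g i j = L + sl f1 g1 ⟨(i : ℕ) - 1, by omega⟩ ⟨(j : ℕ) - 1, by omega⟩ := by
    intro i j h1 h2 h3
    have hfi : f1 ⟨(i : ℕ) - 1, by omega⟩ = f i := by
      rw [hf1]; simp only [Nat.sub_add_cancel h1, Fin.eta]
    have hfj : f1 ⟨(j : ℕ) - 1, by omega⟩ = f j := by
      rw [hf1]; simp only [Nat.sub_add_cancel (by omega : 1 ≤ (j : ℕ)), Fin.eta]
    have hne : f j - f i ≠ 0 := ne_of_gt (gap (Fin.lt_def.2 h2))
    simp only [sl]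
    rw [hgmid i h1 (by omega), hgmid j (by omega) h3,
      hD1 i h1 (by omega), hD1 j (by omega) h3, hfi, hfj]
    field_simp
    ring
  have sltop : ∀ (i j : Fin n) (h1 : K ≤ (i : ℕ)) (h2 : (i : ℕ) < (j : ℕ)),
      sl f g i j = sl f2 g2 ⟨(i : ℕ) - K, by have := i.isLt; omega⟩
        ⟨(j : ℕ) - K, by have := j.isLt; omega⟩ := by
    intro i j h1 h2
    have hfi : f2 ⟨(i : ℕ) - K, by have := i.isLt; omega⟩ = f i := by
      rw [hf2]; simp only [Nat.sub_add_cancel h1, Fin.eta]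
    have hfj : f2 ⟨(j : ℕ) - K, by have := j.isLt; omega⟩ = f j := by
      rw [hf2]; simp only [Nat.sub_add_cancel (by omega : K ≤ (j : ℕ)), Fin.eta]
    simp only [sl]
    rw [hgtop i h1, hgtop j (by omega), hG2, hG2, hfi, hfj]
    ring
  -- relating a to a1, a2
  have haimid : ∀ (i : Fin n) (h1 : 0 < (i : ℕ)) (h2 : (i : ℕ) < K),
      ((a1 ⟨(i : ℕ) - 1, by omega⟩ : Fin K) : ℕ) = (a i : ℕ) - 1 := by
    intro i h1 h2
    rw [ha1]
    rw [if_neg (by simp; omega)]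
    simp only [Nat.sub_add_cancel h1, Fin.eta]
  have haitop : ∀ i : Fin n, K ≤ (i : ℕ) →
      ((a2 ⟨(i : ℕ) - K, by have := i.isLt; omega⟩ : Fin (n - K)) : ℕ) = (a i : ℕ) - K := by
    intro i h1
    rw [ha2]
    simp only [Nat.sub_add_cancel h1, Fin.eta]
  -- the verification
  refine ⟨g, fun i hi => ⟨ha.2.1 i hi, fun j hij hja => ?_⟩⟩
  have hij' : (i : ℕ) < (j : ℕ) := hij
  have hai1 : (i : ℕ) < (a i : ℕ) := hstep i hi
  rcases Nat.eq_zero_or_pos (i : ℕ) with hiz | hipos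
  · -- case i = 0
    have hie : i = ⟨0, by omega⟩ := Fin.ext hiz
    have hai : (a i : ℕ) = K := by rw [hie]; exact hKdef.symm
    have hRHS : sl f g i (a i) = S := by
      have haiF : a i = ⟨K, hKn⟩ := Fin.ext hai
      rw [haiF, hie]
      simp only [sl]
      rw [hgK, hg0]
      have hne : f ⟨K, hKn⟩ - f ⟨0, by omega⟩ ≠ 0 :=
        ne_of_gt (gap (Fin.mk_lt_mk.2 hK0))
      field_simp
      ring
    rw [hRHS]
    rcases lt_trichotomy (j : ℕ) K with hjK | hjK | hjK
    · have h0j : 0 < (j : ℕ) := by omega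
      simp only [sl]
      rw [hgmid j h0j (by omega), hie, hg0]
      rw [div_lt_iff₀ (gap (show (⟨0, by omega⟩ : Fin n) < j from Fin.lt_def.2 (by omega)))]
      have key := hL2 j h0j hjK
      nlinarith [key]
    · exact absurd (Fin.ext (hjK.trans hai.symm)) hja
    · simp only [sl]
      rw [hgtop j (by omega), hie, hg0]
      rw [div_lt_iff₀ (gap (show (⟨0, by omega⟩ : Fin n) < j from Fin.lt_def.2 (by omega)))]
      have key := hS j hjK
      nlinarith [key]
  rcases lt_or_ge (i : ℕ) K with hiK | hiK
  · -- case 0 < i < K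
    have haiK : (a i : ℕ) ≤ K := hsub1 i hipos hiK
    have hRHS : sl f g i (a i) =
        L + sl f1 g1 ⟨(i : ℕ) - 1, by omega⟩ (a1 ⟨(i : ℕ) - 1, by omega⟩) := by
      rw [slmid i (a i) hipos hai1 haiK]
      congr 1
      congr 1
      exact (Fin.ext (haimid i hipos hiK)).symm
    rw [hRHS]
    have hbi := hg1 ⟨(i : ℕ) - 1, by omega⟩ (by simp; omega)
    rcases le_or_gt (j : ℕ) K with hjK | hjK
    · rw [slmid i j hipos hij' hjK]
      have hlt : (⟨(i : ℕ) - 1, by omega⟩ : Fin K) < ⟨(j : ℕ) - 1, by omega⟩ :=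
        Fin.mk_lt_mk.2 (by omega)
      have hne : (⟨(j : ℕ) - 1, by omega⟩ : Fin K) ≠ a1 ⟨(i : ℕ) - 1, by omega⟩ := by
        intro hcon
        apply hja
        have h5 : (j : ℕ) - 1 = ((a1 ⟨(i : ℕ) - 1, by omega⟩ : Fin K) : ℕ) :=
          congrArg (fun t : Fin K => (t : ℕ)) hcon
        rw [haimid i hipos hiK] at h5
        exact Fin.ext (by omega)
      have := hbi.2 ⟨(j : ℕ) - 1, by omega⟩ hlt hne
      linarith
    · have key := hL1 i j hipos hiK hjK
      have hout : sl f g i j = (g j - g i) / (f j - f i) := rfl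
      rw [hout, hgtop j (by omega), hgmid i hipos (le_of_lt hiK)]
      rw [div_lt_iff₀ (gap (Fin.lt_def.2 hij'))]
      nlinarith [key]
  · -- case i ≥ K
    have hRHS : sl f g i (a i) =
        sl f2 g2 ⟨(i : ℕ) - K, by have := i.isLt; omega⟩
          (a2 ⟨(i : ℕ) - K, by have := i.isLt; omega⟩) := by
      rw [sltop i (a i) hiK hai1]
      congr 1
      congr 1
      exact (haitop i hiK).symm
    rw [hRHS, sltop i j hiK hij']
    have hbi := hg2 ⟨(i : ℕ) - K, by have := i.isLt; omega⟩ (by simp; omega)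
    have hlt : (⟨(i : ℕ) - K, by have := i.isLt; omega⟩ : Fin (n - K)) <
        ⟨(j : ℕ) - K, by have := j.isLt; omega⟩ := Fin.mk_lt_mk.2 (by omega)
    have hne : (⟨(j : ℕ) - K, by have := j.isLt; omega⟩ : Fin (n - K)) ≠
        a2 ⟨(i : ℕ) - K, by have := i.isLt; omega⟩ := by
      intro hcon
      apply hja
      have h5 : (j : ℕ) - K = ((a2 ⟨(i : ℕ) - K, by have := i.isLt; omega⟩ : Fin (n - K)) : ℕ) :=
        congrArg (fun t : Fin (n - K) => (t : ℕ)) hcon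
      rw [haitop i hiK] at h5
      exact Fin.ext (by omega)
    exact hbi.2 ⟨(j : ℕ) - K, by have := j.isLt; omega⟩ hlt hne

def NCF (n : ℕ) : Finset (Fin n → Fin n) :=
  Finset.univ.filter (NCP (n := n))

def glue {N K : ℕ} (hK : 0 < K) (hKN : K < N)
    (b : Fin K → Fin K) (c : Fin (N - K) → Fin (N - K)) : Fin N → Fin N := fun j =>
  if (j : ℕ) = 0 then ⟨K, hKN⟩
  else if h : (j : ℕ) < K then
    ⟨(b ⟨(j : ℕ) - 1, by omega⟩ : ℕ) + 1, by
      have := (b ⟨(j : ℕ) - 1, by omega⟩).isLt; omega⟩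
  else
    ⟨(c ⟨(j : ℕ) - K, by have := j.isLt; omega⟩ : ℕ) + K, by
      have := (c ⟨(j : ℕ) - K, by have := j.isLt; omega⟩).isLt; omega⟩

def cut1 {N K : ℕ} (hKN : K < N) (a : Fin N → Fin N) : Fin K → Fin K := fun t =>
  if (t : ℕ) + 1 = K then t
  else ⟨min ((a ⟨(t : ℕ) + 1, by have := t.isLt; omega⟩ : ℕ) - 1) (K - 1), by
    have := t.isLt
    exact lt_of_le_of_lt (Nat.min_le_right _ _) (by omega)⟩

def cut2 {N K : ℕ} (hKN : K < N) (a : Fin N → Fin N) : Fin (N - K) → Fin (N - K) := fun t =>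
  ⟨min ((a ⟨(t : ℕ) + K, by have := t.isLt; omega⟩ : ℕ) - K) (N - K - 1), by
    have := t.isLt
    exact lt_of_le_of_lt (Nat.min_le_right _ _) (by omega)⟩

section decomp

variable {N K : ℕ} (hK : 0 < K) (hKN : K < N)

lemma ncp_cut1 {a : Fin N → Fin N} (ha : NCP a)
    (ha0 : (a ⟨0, by omega⟩ : ℕ) = K) : NCP (cut1 hKN a) := by
  have hsub1 : ∀ j : Fin N, 0 < (j : ℕ) → (j : ℕ) < K → (a j : ℕ) ≤ K := by
    intro j h1 h2
    have := ha.2.2 ⟨0, by omega⟩ j (by exact h1) (by rw [Fin.lt_def, ha0]; exact h2)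
    rw [← ha0]; exact this
  have hval : ∀ (t : Fin K), (t : ℕ) + 1 ≠ K →
      (cut1 hKN a t : ℕ) = (a ⟨(t : ℕ) + 1, by have := t.isLt; omega⟩ : ℕ) - 1 ∧
      (t : ℕ) < (a ⟨(t : ℕ) + 1, by have := t.isLt; omega⟩ : ℕ) - 1 ∧
      (a ⟨(t : ℕ) + 1, by have := t.isLt; omega⟩ : ℕ) ≤ K := by
    intro t ht
    have htK := t.isLt
    have h1 : ((⟨(t : ℕ) + 1, by omega⟩ : Fin N) : ℕ) + 1 < N := by simp; omega
    have h2 := ha.2.1 ⟨(t : ℕ) + 1, by omega⟩ (by simp; omega)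
    rw [Fin.lt_def] at h2; simp at h2
    have h3 := hsub1 ⟨(t : ℕ) + 1, by omega⟩ (by simp) (by simp; omega)
    refine ⟨?_, by omega, h3⟩
    show (if (t : ℕ) + 1 = K then _ else _ : Fin K).1 = _
    rw [if_neg ht]
    simp only
    omega
  refine ⟨fun t ht => ?_, fun t ht => ?_, fun s t hst hta => ?_⟩
  · apply Fin.ext
    show (if (t : ℕ) + 1 = K then t else _ : Fin K).1 = _
    rw [if_pos ht]
  · rw [Fin.lt_def]
    obtain ⟨e1, e2, _⟩ := hval t (by omega)
    omega
  · have hsK : (s : ℕ) + 1 ≠ K := by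
      intro h
      rw [Fin.lt_def] at hta
      have : (cut1 hKN a s : ℕ) = (s : ℕ) := by
        show (if (s : ℕ) + 1 = K then s else _ : Fin K).1 = _
        rw [if_pos h]
      have := t.isLt
      omega
    obtain ⟨e1, e2, e3⟩ := hval s hsK
    rw [Fin.lt_def, e1] at hta
    rcases eq_or_ne ((t : ℕ) + 1) K with htK | htK
    · rw [Fin.le_def]
      have : (cut1 hKN a t : ℕ) = (t : ℕ) := by
        show (if (t : ℕ) + 1 = K then t else _ : Fin K).1 = _
        rw [if_pos htK]
      omega
    · obtain ⟨e1', e2', e3'⟩ := hval t htK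
      rw [Fin.le_def, e1, e1']
      have hst' : (s : ℕ) < (t : ℕ) := hst
      have h4 := ha.2.2 ⟨(s : ℕ) + 1, by have := s.isLt; omega⟩ ⟨(t : ℕ) + 1, by have := t.isLt; omega⟩
        (by show (s : ℕ) + 1 < (t : ℕ) + 1; omega) (by show ((t : ℕ) + 1) < _; omega)
      omega

lemma ncp_cut2 {a : Fin N → Fin N} (ha : NCP a) : NCP (cut2 hKN a) := by
  have hval : ∀ (t : Fin (N - K)),
      (cut2 hKN a t : ℕ) = (a ⟨(t : ℕ) + K, by have := t.isLt; omega⟩ : ℕ) - K := by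
    intro t
    show min _ _ = _
    have := (a ⟨(t : ℕ) + K, by have := t.isLt; omega⟩).isLt
    omega
  refine ⟨fun t ht => ?_, fun t ht => ?_, fun s t hst hta => ?_⟩
  · apply Fin.ext
    rw [hval]
    have := ha.1 ⟨(t : ℕ) + K, by have := t.isLt; omega⟩ (by show (t : ℕ) + K + 1 = N; omega)
    have := congrArg (fun x : Fin N => (x : ℕ)) this
    simp at this
    omega
  · rw [Fin.lt_def, hval]
    have := ha.2.1 ⟨(t : ℕ) + K, by have := t.isLt; omega⟩ (by show (t : ℕ) + K + 1 < N; omega)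
    rw [Fin.lt_def] at this
    simp at this
    omega
  · have hst' : (s : ℕ) < (t : ℕ) := hst
    rw [Fin.lt_def, hval] at hta
    rw [Fin.le_def, hval, hval]
    have h4 := ha.2.2 ⟨(s : ℕ) + K, by have := s.isLt; omega⟩ ⟨(t : ℕ) + K, by have := t.isLt; omega⟩
      (by show (s : ℕ) + K < (t : ℕ) + K; omega) (by show ((t : ℕ) + K) < _; omega)
    omega

lemma cut2_val (a : Fin N → Fin N) (t : Fin (N - K)) :
    (cut2 hKN a t : ℕ) = (a ⟨(t : ℕ) + K, by have := t.isLt; omega⟩ : ℕ) - K := by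
  show min _ _ = _
  have := (a ⟨(t : ℕ) + K, by have := t.isLt; omega⟩).isLt
  omega

lemma glue_cut {a : Fin N → Fin N} (ha : NCP a)
    (ha0 : (a ⟨0, by omega⟩ : ℕ) = K) :
    glue hK hKN (cut1 hKN a) (cut2 hKN a) = a := by
  have hsub1 : ∀ j : Fin N, 0 < (j : ℕ) → (j : ℕ) < K → (a j : ℕ) ≤ K := by
    intro j h1 h2
    have := ha.2.2 ⟨0, by omega⟩ j (by exact h1) (by rw [Fin.lt_def, ha0]; exact h2)
    rw [← ha0]; exact this
  funext j
  apply Fin.ext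
  by_cases h0 : (j : ℕ) = 0
  · simp only [glue]
    rw [if_pos h0]
    rw [show j = (⟨0, by omega⟩ : Fin N) from Fin.ext h0]
    exact ha0.symm
  by_cases h1 : (j : ℕ) < K
  · simp only [glue]
    rw [if_neg h0, dif_pos h1]
    simp only
    -- cut1 value at ⟨j-1⟩
    have ht : ((⟨(j : ℕ) - 1, by omega⟩ : Fin K) : ℕ) + 1 ≠ K := by simp; omega
    have hstep := ha.2.1 j (by omega)
    rw [Fin.lt_def] at hstep
    have hv : (cut1 hKN a ⟨(j : ℕ) - 1, by omega⟩ : ℕ) =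
        min ((a ⟨(j : ℕ) - 1 + 1, by omega⟩ : ℕ) - 1) (K - 1) := by
      show (if _ then _ else _ : Fin K).1 = _
      rw [if_neg ht]
    have he : (⟨(j : ℕ) - 1 + 1, by omega⟩ : Fin N) = j := Fin.ext (by show (j:ℕ) - 1 + 1 = (j:ℕ); omega)
    rw [he] at hv
    have hup := hsub1 j (by omega) h1
    rw [hv]
    omega
  · simp only [glue]
    rw [if_neg h0, dif_neg h1]
    simp only
    rw [cut2_val]
    have he : (⟨(j : ℕ) - K + K, by have := j.isLt; omega⟩ : Fin N) = j :=
      Fin.ext (by show (j:ℕ) - K + K = (j:ℕ); omega)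
    rw [he]
    have haj : K ≤ (a j : ℕ) := by
      rcases eq_or_ne ((j : ℕ) + 1) N with h | h
      · have := congrArg (fun x : Fin N => (x : ℕ)) (ha.1 j h); omega
      · have := ha.2.1 j (by have := j.isLt; omega)
        rw [Fin.lt_def] at this; omega
    omega

variable (b : Fin K → Fin K) (c : Fin (N - K) → Fin (N - K))

lemma glue_val_0 : glue hK hKN b c ⟨0, by omega⟩ = ⟨K, hKN⟩ := by
  simp only [glue]
  simp

lemma glue_val_mid (j : Fin N) (h0 : 0 < (j : ℕ)) (h1 : (j : ℕ) < K) :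
    (glue hK hKN b c j : ℕ) = (b ⟨(j : ℕ) - 1, by omega⟩ : ℕ) + 1 := by
  simp only [glue]
  rw [if_neg (by omega), dif_pos h1]

lemma glue_val_top (j : Fin N) (h1 : K ≤ (j : ℕ)) :
    (glue hK hKN b c j : ℕ) = (c ⟨(j : ℕ) - K, by have := j.isLt; omega⟩ : ℕ) + K := by
  simp only [glue]
  rw [if_neg (by omega), dif_neg (by omega)]

lemma ncp_glue (hb : NCP b) (hc : NCP c) : NCP (glue hK hKN b c) := by
  refine ⟨fun j hj => ?_, fun j hj => ?_, fun i j hij hja => ?_⟩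
  · apply Fin.ext
    rw [glue_val_top hK hKN b c j (by omega)]
    have hcl := hc.1 ⟨(j : ℕ) - K, by have := j.isLt; omega⟩ (by show (j:ℕ) - K + 1 = N - K; omega)
    have := congrArg (fun x : Fin (N - K) => (x : ℕ)) hcl
    simp at this
    omega
  · rcases Nat.eq_zero_or_pos (j : ℕ) with h0 | h0
    · rw [Fin.lt_def, show j = (⟨0, by omega⟩ : Fin N) from Fin.ext h0, glue_val_0]
      simp [h0]; omega
    rcases lt_or_ge (j : ℕ) K with h1 | h1
    · rw [Fin.lt_def, glue_val_mid hK hKN b c j h0 h1]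
      have := hb.2.1 ⟨(j : ℕ) - 1, by omega⟩ (by show (j:ℕ) - 1 + 1 < K; omega)
      rw [Fin.lt_def] at this
      simp at this
      omega
    · rw [Fin.lt_def, glue_val_top hK hKN b c j h1]
      have := hc.2.1 ⟨(j : ℕ) - K, by have := j.isLt; omega⟩ (by show (j:ℕ) - K + 1 < N - K; omega)
      rw [Fin.lt_def] at this
      simp at this
      omega
  · have hij' : (i : ℕ) < (j : ℕ) := hij
    rw [Fin.lt_def] at hja
    rw [Fin.le_def]
    rcases Nat.eq_zero_or_pos (i : ℕ) with h0 | h0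
    · rw [show i = (⟨0, by omega⟩ : Fin N) from Fin.ext h0, glue_val_0] at hja ⊢
      have hjK : (j : ℕ) < K := hja
      rw [glue_val_mid hK hKN b c j (by omega) hjK]
      have := (b ⟨(j : ℕ) - 1, by omega⟩).isLt
      simp
    rcases lt_or_ge (i : ℕ) K with h1 | h1
    · rw [glue_val_mid hK hKN b c i h0 h1] at hja
      have hbK := (b ⟨(i : ℕ) - 1, by omega⟩).isLt
      have hjK : (j : ℕ) < K := by omega
      rw [glue_val_mid hK hKN b c i h0 h1, glue_val_mid hK hKN b c j (by omega) hjK]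
      have := hb.2.2 ⟨(i : ℕ) - 1, by omega⟩ ⟨(j : ℕ) - 1, by omega⟩
        (by show (i:ℕ) - 1 < (j:ℕ) - 1; omega) (by show ((j:ℕ) - 1) < _; omega)
      rw [Fin.le_def] at this
      omega
    · rw [glue_val_top hK hKN b c i h1] at hja
      rw [glue_val_top hK hKN b c i h1, glue_val_top hK hKN b c j (by omega)]
      have := hc.2.2 ⟨(i : ℕ) - K, by have := i.isLt; omega⟩ ⟨(j : ℕ) - K, by have := j.isLt; omega⟩
        (by show (i:ℕ) - K < (j:ℕ) - K; omega) (by show ((j:ℕ) - K) < _; omega)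
      rw [Fin.le_def] at this
      omega

lemma cut_glue1 (hb : NCP b) : cut1 hKN (glue hK hKN b c) = b := by
  funext t
  apply Fin.ext
  have htK := t.isLt
  by_cases ht : (t : ℕ) + 1 = K
  · have : (cut1 hKN (glue hK hKN b c) t : ℕ) = (t : ℕ) := by
      show (if _ then _ else _ : Fin K).1 = _
      rw [if_pos ht]
    rw [this]
    have := congrArg (fun x : Fin K => (x : ℕ)) (hb.1 t ht)
    simpa using this.symm
  · have : (cut1 hKN (glue hK hKN b c) t : ℕ) =
        min ((glue hK hKN b c ⟨(t : ℕ) + 1, by omega⟩ : ℕ) - 1) (K - 1) := by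
      show (if _ then _ else _ : Fin K).1 = _
      rw [if_neg ht]
    rw [this, glue_val_mid hK hKN b c ⟨(t : ℕ) + 1, by omega⟩ (by show 0 < (t:ℕ)+1; omega)
      (by show (t:ℕ)+1 < K; omega)]
    have he : (⟨((⟨(t : ℕ) + 1, by omega⟩ : Fin N) : ℕ) - 1,
        by have : ((⟨(t : ℕ) + 1, by omega⟩ : Fin N) : ℕ) = (t : ℕ) + 1 := rfl; omega⟩ : Fin K) = t :=
      Fin.ext (by show (t:ℕ) + 1 - 1 = (t:ℕ); omega)
    rw [he]
    have := (b t).isLt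
    omega

lemma cut_glue2 : cut2 hKN (glue hK hKN b c) = c := by
  funext t
  apply Fin.ext
  have htK := t.isLt
  rw [cut2_val, glue_val_top hK hKN b c ⟨(t : ℕ) + K, by omega⟩ (by show K ≤ (t:ℕ)+K; omega)]
  have he : (⟨((⟨(t : ℕ) + K, by omega⟩ : Fin N) : ℕ) - K,
      by have : ((⟨(t : ℕ) + K, by omega⟩ : Fin N) : ℕ) = (t : ℕ) + K := rfl; omega⟩ : Fin (N - K)) = t :=
    Fin.ext (by show (t:ℕ) + K - K = (t:ℕ); omega)
  rw [he]
  omega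

end decomp

lemma NCF_card_succ (n : ℕ) :
    (NCF (n + 2)).card =
      ∑ k : Fin (n + 1), (NCF ((k : ℕ) + 1)).card * (NCF (n + 2 - ((k : ℕ) + 1))).card := by
  obtain ⟨fib, hfibdef⟩ : ∃ F : (Fin (n + 2) → Fin (n + 2)) → Fin (n + 1),
      ∀ a, (F a : ℕ) = (a ⟨0, Nat.succ_pos _⟩ : ℕ) - 1 :=
    ⟨fun a => ⟨(a ⟨0, Nat.succ_pos _⟩ : ℕ) - 1,
      by have := (a ⟨0, Nat.succ_pos _⟩).isLt; omega⟩, fun _ => rfl⟩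
  have hfib := Finset.card_eq_sum_card_fiberwise
    (f := fib) (s := NCF (n + 2)) (t := Finset.univ) (fun a _ => Finset.mem_univ _)
  rw [hfib]
  refine Finset.sum_congr rfl fun k _ => ?_
  rw [← Finset.card_product]
  have hK : 0 < (k : ℕ) + 1 := Nat.succ_pos _
  have hKN : (k : ℕ) + 1 < n + 2 := by have := k.isLt; omega
  have key : ∀ a, a ∈ (NCF (n + 2)).filter (fun a => fib a = k) →
      NCP a ∧ (a ⟨0, Nat.succ_pos _⟩ : ℕ) = (k : ℕ) + 1 := by
    intro a ha
    simp only [NCF, Finset.mem_filter, Finset.mem_univ, true_and] at ha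
    obtain ⟨hNCP, ha2⟩ := ha
    have h0 : 0 < (a ⟨0, Nat.succ_pos _⟩ : ℕ) := hNCP.2.1 ⟨0, Nat.succ_pos _⟩ (by simp)
    have hv := congrArg (fun x : Fin (n + 1) => (x : ℕ)) ha2
    simp only [hfibdef] at hv
    exact ⟨hNCP, by omega⟩
  refine Finset.card_bij' (fun a _ => (cut1 hKN a, cut2 hKN a))
    (fun p _ => glue hK hKN p.1 p.2) ?_ ?_ ?_ ?_
  · intro a ha
    obtain ⟨hNCP, ha0⟩ := key a ha
    simp only [NCF, Finset.mem_product, Finset.mem_filter, Finset.mem_univ, true_and]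
    exact ⟨ncp_cut1 hK hKN hNCP ha0, ncp_cut2 hKN hNCP⟩
  · intro p hp
    simp only [NCF, Finset.mem_product, Finset.mem_filter, Finset.mem_univ, true_and] at hp
    simp only [NCF, Finset.mem_filter, Finset.mem_univ, true_and]
    refine ⟨ncp_glue hK hKN p.1 p.2 hp.1 hp.2, ?_⟩
    apply Fin.ext
    rw [hfibdef]
    have hv : ((glue hK hKN p.1 p.2 ⟨0, Nat.succ_pos _⟩ : Fin (n + 2)) : ℕ) = (k : ℕ) + 1 :=
      congrArg (fun x : Fin (n + 2) => (x : ℕ)) (glue_val_0 hK hKN p.1 p.2)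
    omega
  · intro a ha
    obtain ⟨hNCP, ha0⟩ := key a ha
    exact glue_cut hK hKN hNCP ha0
  · intro p hp
    simp only [NCF, Finset.mem_product, Finset.mem_filter, Finset.mem_univ, true_and] at hp
    exact Prod.ext (cut_glue1 hK hKN p.1 p.2 hp.1) (cut_glue2 hK hKN p.1 p.2)

lemma NCF_card_one : (NCF 1).card = 1 := by decide

theorem NCF_card_catalan : ∀ m, (NCF (m + 1)).card = catalan m := by
  intro m
  induction m using Nat.strong_induction_on with
  | _ m IH =>
  match m with
  | 0 => simpa using NCF_card_one
  | (m' + 1) =>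
    rw [show m' + 1 + 1 = m' + 2 from rfl, NCF_card_succ m', catalan_succ]
    refine Finset.sum_congr rfl fun k _ => ?_
    have h1 : (NCF ((k : ℕ) + 1)).card = catalan k := IH k (by have := k.isLt; omega)
    have h2 : (NCF (m' + 2 - ((k : ℕ) + 1))).card = catalan (m' - (k : ℕ)) := by
      have he : m' + 2 - ((k : ℕ) + 1) = (m' - (k : ℕ)) + 1 := by have := k.isLt; omega
      rw [he]; exact IH (m' - (k : ℕ)) (by have := k.isLt; omega)
    rw [h1, h2]

section bridge

variable {n d : ℕ} (u : Fin n → EuclideanSpace ℝ (Fin d))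
  (c ω : EuclideanSpace ℝ (Fin d)) (f g : Fin n → ℝ)

lemma rho_eq_sl (hf : ∀ i, f i = ⟪c, u i⟫)
    (hg : ∀ i j : Fin n, ⟪ω, u j⟫ - ⟪ω, u i⟫ = g j - g i) (i j : Fin n) :
    rho u c ω i j = sl f g i j := by
  rw [rho, sl, inner_sub_right, inner_sub_right, hf, hf, hg]

lemma bddAbove_slopes (i : Fin n) :
    BddAbove {x : ℝ | ∃ j : Fin n, i < j ∧ x = rho u c ω i j} := by
  apply Set.Finite.bddAbove
  apply (Set.finite_range (fun j : Fin n => rho u c ω i j)).subset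
  rintro x ⟨j, _, rfl⟩
  exact ⟨j, rfl⟩

lemma best_to_generic_arbo (A : Fin n → Fin n)
    (hf : ∀ i, f i = ⟪c, u i⟫)
    (hg : ∀ i j : Fin n, ⟪ω, u j⟫ - ⟪ω, u i⟫ = g j - g i)
    (hb : Best f g A) (hlast : ∀ i : Fin n, (i : ℕ) + 1 = n → A i = i) :
    Generic u c ω ∧ IsArbo u c ω A := by
  have hb' : ∀ i : Fin n, (i : ℕ) + 1 < n →
      i < A i ∧ ∀ j : Fin n, i < j → j ≠ A i → rho u c ω i j < rho u c ω i (A i) := by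
    intro i hi
    refine ⟨(hb i hi).1, fun j hij hja => ?_⟩
    rw [rho_eq_sl u c ω f g hf hg, rho_eq_sl u c ω f g hf hg]
    exact (hb i hi).2 j hij hja
  have htau : ∀ i : Fin n, (i : ℕ) + 1 < n → tau u c ω i = rho u c ω i (A i) := by
    intro i hi
    refine IsGreatest.csSup_eq ⟨⟨A i, (hb' i hi).1, rfl⟩, ?_⟩
    rintro x ⟨j, hij, rfl⟩
    rcases eq_or_ne j (A i) with h | h
    · rw [h]
    · exact ((hb' i hi).2 j hij h).le
  constructor
  · intro i hi
    refine ⟨A i, ⟨(hb' i hi).1, (htau i hi).symm⟩, ?_⟩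
    rintro y ⟨hy1, hy2⟩
    by_contra hne
    have := (hb' i hi).2 y hy1 hne
    rw [hy2, htau i hi] at this
    exact lt_irrefl _ this
  · exact ⟨hlast, fun i hi => ⟨(hb' i hi).1, (htau i hi).symm⟩⟩

lemma generic_arbo_to_best (A : Fin n → Fin n)
    (hf : ∀ i, f i = ⟪c, u i⟫)
    (hg : ∀ i j : Fin n, ⟪ω, u j⟫ - ⟪ω, u i⟫ = g j - g i)
    (hgen : Generic u c ω) (harb : IsArbo u c ω A) : Best f g A := by
  intro i hi
  obtain ⟨hiA, htau⟩ := harb.2 i hi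
  refine ⟨hiA, fun j hij hja => ?_⟩
  rw [← rho_eq_sl u c ω f g hf hg, ← rho_eq_sl u c ω f g hf hg]
  have hle : rho u c ω i j ≤ tau u c ω i :=
    le_csSup (bddAbove_slopes u c ω i) ⟨j, hij, rfl⟩
  rcases eq_or_lt_of_le hle with heq | hlt
  · exfalso
    obtain ⟨y, _, huniq⟩ := hgen i hi
    have h1 := huniq j ⟨hij, heq⟩
    have h2 := huniq (A i) ⟨hiA, htau⟩
    exact hja (h1.trans h2.symm)
  · rw [htau]; exact hlt

end bridge

lemma exists_omega (m : ℕ) (hm : 1 ≤ m) (u : Fin (m + 1) → EuclideanSpace ℝ (Fin m))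
    (hu : AffineIndependent ℝ u) (g : Fin (m + 1) → ℝ) :
    ∃ ω : EuclideanSpace ℝ (Fin m), ∀ i j : Fin (m + 1), ⟪ω, u j⟫ - ⟪ω, u i⟫ = g j - g i := by
  classical
  have i0 : Fin (m + 1) := ⟨0, by omega⟩
  have hne : Nonempty {j : Fin (m + 1) // j ≠ (⟨0, by omega⟩ : Fin (m + 1))} :=
    ⟨⟨⟨1, by omega⟩, by intro h; have := congrArg (fun x : Fin (m + 1) => (x : ℕ)) h; simp at this⟩⟩
  have hli := (affineIndependent_iff_linearIndependent_vsub ℝ u ⟨0, by omega⟩).1 hu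
  have hcard : Fintype.card {j : Fin (m + 1) // j ≠ (⟨0, by omega⟩ : Fin (m + 1))} =
      Module.finrank ℝ (EuclideanSpace ℝ (Fin m)) := by
    rw [finrank_euclideanSpace_fin]
    rw [Fintype.card_subtype_compl, Fintype.card_fin, Fintype.card_unique]; omega
  let B := basisOfLinearIndependentOfCardEqFinrank hli hcard
  let φ := B.constr ℝ (fun j => g ↑j - g ⟨0, by omega⟩)
  let ω := (InnerProductSpace.toDual ℝ (EuclideanSpace ℝ (Fin m))).symm
    (LinearMap.toContinuousLinearMap φ)
  have hω : ∀ x, ⟪ω, x⟫ = φ x := fun x => InnerProductSpace.toDual_symm_apply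
  have hp : ∀ t : Fin (m + 1), ⟪ω, u t⟫ - ⟪ω, u ⟨0, by omega⟩⟫ = g t - g ⟨0, by omega⟩ := by
    intro t
    by_cases ht : t = (⟨0, by omega⟩ : Fin (m + 1))
    · rw [ht]; simp
    · have h1 : ⟪ω, u t⟫ - ⟪ω, u ⟨0, by omega⟩⟫ = ⟪ω, u t - u ⟨0, by omega⟩⟫ :=
        (inner_sub_right _ _ _).symm
      rw [h1]
      have h2 : B ⟨t, ht⟩ = u t - u ⟨0, by omega⟩ := by
        show basisOfLinearIndependentOfCardEqFinrank hli hcard ⟨t, ht⟩ = _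
        rw [coe_basisOfLinearIndependentOfCardEqFinrank]
        rfl
      rw [← h2, hω, Module.Basis.constr_basis]
  refine ⟨ω, fun i j => ?_⟩
  have h1 := hp i
  have h2 := hp j
  linarith


end MaxSlope

/-- the number of max-slope arborescences of a full-dimensional
simplex with generic objective direction is the Catalan number `catalan m`. -/
theorem card_arborescences_eq_catalan (m : ℕ) (hm : 1 ≤ m)
    (u : Fin (m + 1) → EuclideanSpace ℝ (Fin m)) (hu : AffineIndependent ℝ u)
    (c : EuclideanSpace ℝ (Fin m))
    (hc : ∀ i j : Fin (m + 1), i < j → ⟪c, u i⟫ < ⟪c, u j⟫) :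
    {A : Fin (m + 1) → Fin (m + 1) |
        ∃ ω : EuclideanSpace ℝ (Fin m), Generic u c ω ∧ IsArbo u c ω A}.ncard =
      catalan m := by
  classical
  have hsm : StrictMono (fun i : Fin (m + 1) => (⟪c, u i⟫ : ℝ)) := fun i j h => hc i j h
  have hset : {A : Fin (m + 1) → Fin (m + 1) |
      ∃ ω : EuclideanSpace ℝ (Fin m), Generic u c ω ∧ IsArbo u c ω A} =
      ↑(MaxSlope.NCF (m + 1)) := by
    ext A
    simp only [Set.mem_setOf_eq, Finset.mem_coe, MaxSlope.NCF, Finset.mem_filter,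
      Finset.mem_univ, true_and]
    constructor
    · rintro ⟨ω, hgen, harb⟩
      have hb := MaxSlope.generic_arbo_to_best u c ω
        (fun i => ⟪c, u i⟫) (fun i => ⟪ω, u i⟫) A
        (fun i => rfl) (fun i j => rfl) hgen harb
      exact MaxSlope.best_ncp hsm hb harb.1
    · intro hA
      obtain ⟨g, hg⟩ := MaxSlope.exists_best (m + 1) _ hsm A hA
      obtain ⟨ω, hω⟩ := MaxSlope.exists_omega m hm u hu g
      obtain ⟨hgen, harb⟩ := MaxSlope.best_to_generic_arbo u c ω
        (fun i => ⟪c, u i⟫) g A (fun i => rfl) hω hg hA.1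
      exact ⟨ω, hgen, harb⟩
  rw [hset, Set.ncard_coe_finset, MaxSlope.NCF_card_catalan]
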